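/- arXiv:1105.4580 — 3 statements merged into one kernel-verified Lean document; each statement's English description precedes it below -/
import Mathlib

section
/- For all bicomplex numbers z, w ∈ 𝕋: χₑ(z, w) ≥ ‖z - w‖ / (sqrt(1 + 2‖z‖²) · sqrt(1 + 2‖w‖²)). -/
/-- The bicomplex numbers `𝕋`, represented as pairs `(z₁, z₂)` meaning `z₁ + z₂ i₂`. -/
abbrev Bicomplex := ℂ × ℂ

/-- The projection `P₁(z₁ + z₂ i₂) = z₁ - z₂ i₁`. -/
def P1 (w : Bicomplex) : ℂ := w.1 - w.2 * Complex.I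

/-- The projection `P₂(z₁ + z₂ i₂) = z₁ + z₂ i₁`. -/
def P2 (w : Bicomplex) : ℂ := w.1 + w.2 * Complex.I

/-- The Euclidean norm on `𝕋 ≅ ℝ⁴`: `‖z₁ + z₂ i₂‖² = |z₁|² + |z₂|²`. -/
noncomputable def Bnorm (w : Bicomplex) : ℝ := Real.sqrt (‖w.1‖ ^ 2 + ‖w.2‖ ^ 2)

/-- The chordal metric on `ℂ`: `χ(a,b) = |a-b| / (sqrt(1+|a|²) sqrt(1+|b|²))`. -/
noncomputable def chord (a b : ℂ) : ℝ :=
  ‖a - b‖ / (Real.sqrt (1 + ‖a‖ ^ 2) * Real.sqrt (1 + ‖b‖ ^ 2))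

/-- The bicomplex chordal metric (restricted to `𝕋`):
`χₑ(z,w) = sqrt((χ(P₁z, P₁w)² + χ(P₂z, P₂w)²)/2)`. -/
noncomputable def chiE (z w : Bicomplex) : ℝ :=
  Real.sqrt ((chord (P1 z) (P1 w) ^ 2 + chord (P2 z) (P2 w) ^ 2) / 2)

lemma proj_sq_sum (u : Bicomplex) : ‖P1 u‖ ^ 2 + ‖P2 u‖ ^ 2 = 2 * (‖u.1‖ ^ 2 + ‖u.2‖ ^ 2) := by
  simp only [P1, P2, Complex.sq_norm, Complex.normSq_apply,
    Complex.sub_re, Complex.sub_im, Complex.add_re, Complex.add_im,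
    Complex.mul_re, Complex.mul_im, Complex.I_re, Complex.I_im]
  ring

lemma chord_sq (a b : ℂ) :
    chord a b ^ 2 = ‖a - b‖ ^ 2 / ((1 + ‖a‖ ^ 2) * (1 + ‖b‖ ^ 2)) := by
  unfold chord
  rw [div_pow, mul_pow, Real.sq_sqrt (by positivity), Real.sq_sqrt (by positivity)]

/-- For all bicomplex numbers `z, w`:
`χₑ(z, w) ≥ ‖z - w‖ / (sqrt(1 + 2‖z‖²) · sqrt(1 + 2‖w‖²))`. -/
theorem chiE_lower_bound (z w : Bicomplex) :
    chiE z w ≥ Bnorm (z - w) /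
      (Real.sqrt (1 + 2 * Bnorm z ^ 2) * Real.sqrt (1 + 2 * Bnorm w ^ 2)) := by
  have hBz : Bnorm z ^ 2 = ‖z.1‖ ^ 2 + ‖z.2‖ ^ 2 := Real.sq_sqrt (by positivity)
  have hBw : Bnorm w ^ 2 = ‖w.1‖ ^ 2 + ‖w.2‖ ^ 2 := Real.sq_sqrt (by positivity)
  set A : ℝ := 1 + 2 * Bnorm z ^ 2 with hA
  set B : ℝ := 1 + 2 * Bnorm w ^ 2 with hB
  have hA1 : (1:ℝ) ≤ A := by rw [hA, hBz]; nlinarith [sq_nonneg ‖z.1‖, sq_nonneg ‖z.2‖]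
  have hB1 : (1:ℝ) ≤ B := by rw [hB, hBw]; nlinarith [sq_nonneg ‖w.1‖, sq_nonneg ‖w.2‖]
  have hAB : (0:ℝ) < A * B := by nlinarith
  set n : ℝ := ‖(z - w).1‖ ^ 2 + ‖(z - w).2‖ ^ 2 with hn
  have hn0 : 0 ≤ n := by positivity
  -- rewrite RHS as a single sqrt
  have hRHS : Bnorm (z - w) / (Real.sqrt A * Real.sqrt B) = Real.sqrt (n / (A * B)) := by
    rw [Real.sqrt_div hn0, Real.sqrt_mul (by positivity : (0:ℝ) ≤ A), Bnorm]
  rw [ge_iff_le, hRHS, chiE]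
  apply Real.sqrt_le_sqrt
  -- projection differences
  have hP1 : P1 z - P1 w = P1 (z - w) := by simp [P1]; ring
  have hP2 : P2 z - P2 w = P2 (z - w) := by simp [P2]; ring
  have hsum : ‖P1 z - P1 w‖ ^ 2 + ‖P2 z - P2 w‖ ^ 2 = 2 * n := by
    rw [hP1, hP2, hn]; exact proj_sq_sum (z - w)
  have hz1 : 1 + ‖P1 z‖ ^ 2 ≤ A := by
    have := proj_sq_sum z; rw [hA, hBz]; nlinarith [sq_nonneg ‖P2 z‖]
  have hz2 : 1 + ‖P2 z‖ ^ 2 ≤ A := by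
    have := proj_sq_sum z; rw [hA, hBz]; nlinarith [sq_nonneg ‖P1 z‖]
  have hw1 : 1 + ‖P1 w‖ ^ 2 ≤ B := by
    have := proj_sq_sum w; rw [hB, hBw]; nlinarith [sq_nonneg ‖P2 w‖]
  have hw2 : 1 + ‖P2 w‖ ^ 2 ≤ B := by
    have := proj_sq_sum w; rw [hB, hBw]; nlinarith [sq_nonneg ‖P1 w‖]
  have hd1 : (0:ℝ) < (1 + ‖P1 z‖ ^ 2) * (1 + ‖P1 w‖ ^ 2) := by positivity
  have hd2 : (0:ℝ) < (1 + ‖P2 z‖ ^ 2) * (1 + ‖P2 w‖ ^ 2) := by positivity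
  have hm1 : (1 + ‖P1 z‖ ^ 2) * (1 + ‖P1 w‖ ^ 2) ≤ A * B := by
    apply mul_le_mul hz1 hw1 (by positivity) (by linarith)
  have hm2 : (1 + ‖P2 z‖ ^ 2) * (1 + ‖P2 w‖ ^ 2) ≤ A * B := by
    apply mul_le_mul hz2 hw2 (by positivity) (by linarith)
  have hc1 : ‖P1 z - P1 w‖ ^ 2 / (A * B) ≤ chord (P1 z) (P1 w) ^ 2 := by
    rw [chord_sq]; exact div_le_div_of_nonneg_left (by positivity) hd1 hm1
  have hc2 : ‖P2 z - P2 w‖ ^ 2 / (A * B) ≤ chord (P2 z) (P2 w) ^ 2 := by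
    rw [chord_sq]; exact div_le_div_of_nonneg_left (by positivity) hd2 hm2
  have : n / (A * B) = (‖P1 z - P1 w‖ ^ 2 / (A * B) + ‖P2 z - P2 w‖ ^ 2 / (A * B)) / 2 := by
    rw [← add_div, hsum]; ring
  rw [this]
  linarith
end

section
/- There exist bicomplex numbers z, w with ‖z‖ ≤ ‖w‖ but χₑ(0, z) > χₑ(0, w); for instance z = (1+2i₁)e₁ + (2+3i₁)e₂ and w = (1+i₁)e₁ + (3+3i₁)e₂ satisfy ‖z‖ ≤ ‖w‖ and χₑ(0,z)² = 0.88 > 0.80 = χₑ(0,w)². -/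
/-- The bicomplex number with idempotent components `a, b`, i.e. `a e₁ + b e₂`,
written in the coordinates `z₁ + z₂ i₂`. -/
noncomputable def fromIdem (a b : ℂ) : Bicomplex := ((a + b) / 2, (a - b) * Complex.I / 2)

lemma P1_fromIdem (a b : ℂ) : P1 (fromIdem a b) = a := by
  unfold P1 fromIdem
  field_simp; ring_nf; rw [Complex.I_sq]; ring

lemma P2_fromIdem (a b : ℂ) : P2 (fromIdem a b) = b := by
  unfold P2 fromIdem
  field_simp; ring_nf; rw [Complex.I_sq]; ring

lemma Bnorm_fromIdem (a b : ℂ) : Bnorm (fromIdem a b) = Real.sqrt ((‖a‖^2 + ‖b‖^2)/2) := by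
  unfold Bnorm fromIdem
  congr 1
  have h1 : ‖(a + b) / 2‖ = ‖a + b‖ / 2 := by simp [norm_div]
  have h2 : ‖(a - b) * Complex.I / 2‖ = ‖a - b‖ / 2 := by simp [norm_div, norm_mul]
  rw [h1, h2]
  have := parallelogram_law_with_norm ℝ a b
  nlinarith [this]

lemma chord_zero_sq (a : ℂ) : chord 0 a ^ 2 = ‖a‖^2 / (1 + ‖a‖^2) := by
  unfold chord
  simp only [zero_sub, norm_neg, norm_zero]
  rw [div_pow, mul_pow, Real.sq_sqrt (by positivity), Real.sq_sqrt (by positivity)]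
  norm_num

lemma chiE_zero (a b : ℂ) :
    chiE 0 (fromIdem a b) =
      Real.sqrt ((‖a‖^2/(1+‖a‖^2) + ‖b‖^2/(1+‖b‖^2))/2) := by
  unfold chiE
  have h0 : P1 (0 : Bicomplex) = 0 := by simp [P1]
  have h0' : P2 (0 : Bicomplex) = 0 := by simp [P2]
  rw [h0, h0', P1_fromIdem, P2_fromIdem, chord_zero_sq, chord_zero_sq]

/-- There exist bicomplex numbers `z, w` with `‖z‖ ≤ ‖w‖` but `χₑ(0, z) > χₑ(0, w)`;
for instance `z = (1+2i₁)e₁ + (2+3i₁)e₂` and `w = (1+i₁)e₁ + (3+3i₁)e₂`. -/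
theorem chiE_not_norm_monotone :
    (Bnorm (fromIdem (1 + 2 * Complex.I) (2 + 3 * Complex.I)) ≤
        Bnorm (fromIdem (1 + Complex.I) (3 + 3 * Complex.I)) ∧
      chiE 0 (fromIdem (1 + 2 * Complex.I) (2 + 3 * Complex.I)) >
        chiE 0 (fromIdem (1 + Complex.I) (3 + 3 * Complex.I))) ∧
    ∃ z w : Bicomplex, Bnorm z ≤ Bnorm w ∧ chiE 0 z > chiE 0 w := by
  have n1 : ‖(1 + 2*Complex.I)‖^2 = 5 := by
    rw [Complex.sq_norm]; simp [Complex.normSq_apply]; norm_num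
  have n2 : ‖(2 + 3*Complex.I)‖^2 = 13 := by
    rw [Complex.sq_norm]; simp [Complex.normSq_apply]; norm_num
  have n3 : ‖(1 + Complex.I)‖^2 = 2 := by
    rw [Complex.sq_norm]; simp [Complex.normSq_apply]; norm_num
  have n4 : ‖(3 + 3*Complex.I)‖^2 = 18 := by
    rw [Complex.sq_norm]; simp [Complex.normSq_apply]; norm_num
  have h : Bnorm (fromIdem (1 + 2 * Complex.I) (2 + 3 * Complex.I)) ≤
        Bnorm (fromIdem (1 + Complex.I) (3 + 3 * Complex.I)) ∧
      chiE 0 (fromIdem (1 + 2 * Complex.I) (2 + 3 * Complex.I)) >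
        chiE 0 (fromIdem (1 + Complex.I) (3 + 3 * Complex.I)) := by
    constructor
    · rw [Bnorm_fromIdem, Bnorm_fromIdem, n1, n2, n3, n4]
      apply Real.sqrt_le_sqrt; norm_num
    · rw [chiE_zero, chiE_zero, n1, n2, n3, n4]
      apply Real.sqrt_lt_sqrt (by positivity)
      norm_num
  exact ⟨h, _, _, h.1, h.2⟩
end

section
/- If a sequence of functions fₙ : E → 𝕋 (E ⊂ 𝕋) converges bispherically uniformly on E to a bounded function f : E → 𝕋, then fₙ converges uniformly to f on E in the Euclidean norm. -/
lemma bnorm_nonneg (w : Bicomplex) : 0 ≤ Bnorm w := Real.sqrt_nonneg _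

lemma bnorm_sq (w : Bicomplex) : Bnorm w ^ 2 = ‖w.1‖ ^ 2 + ‖w.2‖ ^ 2 :=
  Real.sq_sqrt (by positivity)

lemma chiE_nonneg (z w : Bicomplex) : 0 ≤ chiE z w := Real.sqrt_nonneg _

lemma sum_P_sq (z : Bicomplex) : ‖P1 z‖ ^ 2 + ‖P2 z‖ ^ 2 = 2 * Bnorm z ^ 2 := by
  rw [bnorm_sq]
  simp only [P1, P2, Complex.sq_norm,
    Complex.normSq_apply, Complex.sub_re, Complex.sub_im, Complex.add_re, Complex.add_im,
    Complex.mul_re, Complex.mul_im, Complex.I_re, Complex.I_im]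
  ring

lemma P1_sub (z w : Bicomplex) : P1 (z - w) = P1 z - P1 w := by
  simp [P1, Prod.fst_sub, Prod.snd_sub]; ring

lemma P2_sub (z w : Bicomplex) : P2 (z - w) = P2 z - P2 w := by
  simp [P2, Prod.fst_sub, Prod.snd_sub]; ring

lemma bnorm_add_le (a b : Bicomplex) : Bnorm (a + b) ≤ Bnorm a + Bnorm b := by
  have key : ∀ x y : ℝ, Real.sqrt (x ^ 2 + y ^ 2) = ‖(⟨x, y⟩ : ℂ)‖ := by
    intro x y
    rw [Complex.norm_def, Complex.normSq_apply]; norm_num [sq]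
  have h1 : Bnorm (a + b) ≤ Real.sqrt ((‖a.1‖ + ‖b.1‖) ^ 2 + (‖a.2‖ + ‖b.2‖) ^ 2) := by
    apply Real.sqrt_le_sqrt
    have u1 := norm_add_le a.1 b.1
    have u2 := norm_add_le a.2 b.2
    simp only [Prod.fst_add, Prod.snd_add]
    nlinarith [norm_nonneg a.1, norm_nonneg b.1, norm_nonneg a.2, norm_nonneg b.2,
      norm_nonneg (a.1 + b.1), norm_nonneg (a.2 + b.2)]
  refine h1.trans ?_
  have e : (⟨‖a.1‖ + ‖b.1‖, ‖a.2‖ + ‖b.2‖⟩ : ℂ) = (⟨‖a.1‖, ‖a.2‖⟩ : ℂ) + ⟨‖b.1‖, ‖b.2‖⟩ := by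
    apply Complex.ext <;> simp
  rw [key, e]
  calc ‖(⟨‖a.1‖, ‖a.2‖⟩ : ℂ) + ⟨‖b.1‖, ‖b.2‖⟩‖
      ≤ ‖(⟨‖a.1‖, ‖a.2‖⟩ : ℂ)‖ + ‖(⟨‖b.1‖, ‖b.2‖⟩ : ℂ)‖ := norm_add_le _ _
    _ = Bnorm a + Bnorm b := by rw [Bnorm, Bnorm, key, key]

lemma chord_mul (a b : ℂ) :
    ‖a - b‖ = chord a b * (Real.sqrt (1 + ‖a‖ ^ 2) * Real.sqrt (1 + ‖b‖ ^ 2)) := by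
  rw [chord, div_mul_cancel₀]
  positivity

set_option maxHeartbeats 1000000 in
lemma bnorm_le_chiE (z w : Bicomplex) :
    Bnorm (z - w) ≤ chiE z w * (Real.sqrt (1 + 2 * Bnorm z ^ 2) * Real.sqrt (1 + 2 * Bnorm w ^ 2)) := by
  have hrhs : 0 ≤ chiE z w * (Real.sqrt (1 + 2 * Bnorm z ^ 2) * Real.sqrt (1 + 2 * Bnorm w ^ 2)) := by
    have := chiE_nonneg z w; positivity
  have hsq : Bnorm (z - w) ^ 2 ≤
      (chiE z w * (Real.sqrt (1 + 2 * Bnorm z ^ 2) * Real.sqrt (1 + 2 * Bnorm w ^ 2))) ^ 2 := by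
    have h1 : Bnorm (z - w) ^ 2 = (‖P1 z - P1 w‖ ^ 2 + ‖P2 z - P2 w‖ ^ 2) / 2 := by
      have := sum_P_sq (z - w)
      rw [P1_sub, P2_sub] at this; linarith
    have hc : chiE z w ^ 2 = (chord (P1 z) (P1 w) ^ 2 + chord (P2 z) (P2 w) ^ 2) / 2 :=
      Real.sq_sqrt (by positivity)
    have hA : Real.sqrt (1 + 2 * Bnorm z ^ 2) ^ 2 = 1 + 2 * Bnorm z ^ 2 :=
      Real.sq_sqrt (by positivity)
    have hB : Real.sqrt (1 + 2 * Bnorm w ^ 2) ^ 2 = 1 + 2 * Bnorm w ^ 2 :=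
      Real.sq_sqrt (by positivity)
    have e1 : ‖P1 z - P1 w‖ ^ 2
        = chord (P1 z) (P1 w) ^ 2 * ((1 + ‖P1 z‖ ^ 2) * (1 + ‖P1 w‖ ^ 2)) := by
      rw [chord_mul (P1 z) (P1 w), mul_pow, mul_pow,
        Real.sq_sqrt (by positivity : (0:ℝ) ≤ 1 + ‖P1 z‖ ^ 2),
        Real.sq_sqrt (by positivity : (0:ℝ) ≤ 1 + ‖P1 w‖ ^ 2)]
    have e2 : ‖P2 z - P2 w‖ ^ 2
        = chord (P2 z) (P2 w) ^ 2 * ((1 + ‖P2 z‖ ^ 2) * (1 + ‖P2 w‖ ^ 2)) := by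
      rw [chord_mul (P2 z) (P2 w), mul_pow, mul_pow,
        Real.sq_sqrt (by positivity : (0:ℝ) ≤ 1 + ‖P2 z‖ ^ 2),
        Real.sq_sqrt (by positivity : (0:ℝ) ≤ 1 + ‖P2 w‖ ^ 2)]
    have b1z : ‖P1 z‖ ^ 2 ≤ 2 * Bnorm z ^ 2 := by
      have := sum_P_sq z; nlinarith [sq_nonneg ‖P2 z‖]
    have b2z : ‖P2 z‖ ^ 2 ≤ 2 * Bnorm z ^ 2 := by
      have := sum_P_sq z; nlinarith [sq_nonneg ‖P1 z‖]
    have b1w : ‖P1 w‖ ^ 2 ≤ 2 * Bnorm w ^ 2 := by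
      have := sum_P_sq w; nlinarith [sq_nonneg ‖P2 w‖]
    have b2w : ‖P2 w‖ ^ 2 ≤ 2 * Bnorm w ^ 2 := by
      have := sum_P_sq w; nlinarith [sq_nonneg ‖P1 w‖]
    have t1 : chord (P1 z) (P1 w) ^ 2 * ((1 + ‖P1 z‖ ^ 2) * (1 + ‖P1 w‖ ^ 2)) ≤
        chord (P1 z) (P1 w) ^ 2 * ((1 + 2 * Bnorm z ^ 2) * (1 + 2 * Bnorm w ^ 2)) := by
      apply mul_le_mul_of_nonneg_left _ (sq_nonneg _)
      apply mul_le_mul (by linarith) (by linarith) (by positivity) (by positivity)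
    have t2 : chord (P2 z) (P2 w) ^ 2 * ((1 + ‖P2 z‖ ^ 2) * (1 + ‖P2 w‖ ^ 2)) ≤
        chord (P2 z) (P2 w) ^ 2 * ((1 + 2 * Bnorm z ^ 2) * (1 + 2 * Bnorm w ^ 2)) := by
      apply mul_le_mul_of_nonneg_left _ (sq_nonneg _)
      apply mul_le_mul (by linarith) (by linarith) (by positivity) (by positivity)
    rw [h1, e1, e2, mul_pow, mul_pow, hA, hB, hc]
    nlinarith [t1, t2]
  calc Bnorm (z - w) = Real.sqrt (Bnorm (z - w) ^ 2) := (Real.sqrt_sq (bnorm_nonneg _)).symm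
    _ ≤ Real.sqrt ((chiE z w * (Real.sqrt (1 + 2 * Bnorm z ^ 2) * Real.sqrt (1 + 2 * Bnorm w ^ 2))) ^ 2) :=
        Real.sqrt_le_sqrt hsq
    _ = _ := Real.sqrt_sq hrhs


set_option maxHeartbeats 1000000 in
/-- If a sequence of functions `fₙ : E → 𝕋` converges bispherically uniformly (i.e.
uniformly in the bicomplex chordal metric `χₑ`) on `E ⊆ 𝕋` to a bounded function `f`,
then `fₙ` converges uniformly to `f` on `E` in the Euclidean norm. -/
theorem unif_bispherical_to_unif_euclidean (E : Set Bicomplex)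
    (f : Bicomplex → Bicomplex) (fn : ℕ → Bicomplex → Bicomplex)
    (hbdd : ∃ M : ℝ, ∀ w ∈ E, Bnorm (f w) ≤ M)
    (hconv : ∀ ε > (0 : ℝ), ∃ N : ℕ, ∀ n ≥ N, ∀ w ∈ E, chiE (fn n w) (f w) < ε) :
    ∀ ε > (0 : ℝ), ∃ N : ℕ, ∀ n ≥ N, ∀ w ∈ E, Bnorm (fn n w - f w) < ε := by
  obtain ⟨M₀, hM₀⟩ := hbdd
  set M : ℝ := max M₀ 0 with hMdef
  have hM0 : 0 ≤ M := le_max_right _ _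
  have hMb : ∀ w ∈ E, Bnorm (f w) ≤ M := fun w hw => (hM₀ w hw).trans (le_max_left _ _)
  set A : ℝ := Real.sqrt (1 + 2 * M ^ 2) with hAdef
  set B : ℝ := Real.sqrt (1 + 2 * (M + 1) ^ 2) with hBdef
  clear_value M A B
  have hA1 : 1 ≤ A := by
    have h := Real.sq_sqrt (show (0:ℝ) ≤ 1 + 2 * M ^ 2 by positivity)
    nlinarith [Real.sqrt_nonneg (1 + 2 * M ^ 2), sq_nonneg M]
  have hB1 : 1 ≤ B := by
    have h := Real.sq_sqrt (show (0:ℝ) ≤ 1 + 2 * (M + 1) ^ 2 by positivity)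
    nlinarith [Real.sqrt_nonneg (1 + 2 * (M + 1) ^ 2), sq_nonneg (M + 1)]
  have hA0 : 0 < A := lt_of_lt_of_le one_pos hA1
  have hB0 : 0 < B := lt_of_lt_of_le one_pos hB1
  have hB2 : B ^ 2 = 1 + 2 * (M + 1) ^ 2 := by
    rw [hBdef]; exact Real.sq_sqrt (by positivity)
  -- bound for the f-factor
  have hfA : ∀ w ∈ E, Real.sqrt (1 + 2 * Bnorm (f w) ^ 2) ≤ A := by
    intro w hw
    rw [hAdef]
    exact Real.sqrt_le_sqrt (by nlinarith [bnorm_nonneg (f w), hMb w hw])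
  set δ₀ : ℝ := 1 / (2 * (B * A)) with hδdef
  have hδ0 : 0 < δ₀ := by positivity
  -- boundedness step
  have hbound : ∀ n : ℕ, ∀ w ∈ E, chiE (fn n w) (f w) < δ₀ → Bnorm (fn n w - f w) ≤ 1 := by
    intro n w hw hc
    by_contra hx
    push_neg at hx
    set x : ℝ := Bnorm (fn n w - f w) with hxdef
    clear_value x
    have hkey := bnorm_le_chiE (fn n w) (f w)
    have hfn : Bnorm (fn n w) ≤ x + M := by
      have e : fn n w = (fn n w - f w) + f w := by ring
      calc Bnorm (fn n w) = Bnorm ((fn n w - f w) + f w) := by rw [← e]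
        _ ≤ Bnorm (fn n w - f w) + Bnorm (f w) := bnorm_add_le _ _
        _ ≤ x + M := by have := hMb w hw; linarith
    have hsn : Real.sqrt (1 + 2 * Bnorm (fn n w) ^ 2) ≤ x * B := by
      have h1 : Real.sqrt (1 + 2 * Bnorm (fn n w) ^ 2) ≤ Real.sqrt ((x * B) ^ 2) := by
        apply Real.sqrt_le_sqrt
        have hxb : Bnorm (fn n w) ^ 2 ≤ (x + M) ^ 2 := by
          nlinarith [bnorm_nonneg (fn n w)]
        rw [mul_pow, hB2]
        have hx2 : 1 ≤ x ^ 2 := by nlinarith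
        have h1 : x + M ≤ x * (M + 1) := by nlinarith
        have h2 : (x + M) ^ 2 ≤ (x * (M + 1)) ^ 2 := by nlinarith [bnorm_nonneg (fn n w)]
        nlinarith [hxb, h2, hx2]
      rwa [Real.sqrt_sq (by nlinarith)] at h1
    have hstep : x ≤ chiE (fn n w) (f w) * (x * (B * A)) := by
      calc x = Bnorm (fn n w - f w) := hxdef
        _ ≤ chiE (fn n w) (f w) *
            (Real.sqrt (1 + 2 * Bnorm (fn n w) ^ 2) * Real.sqrt (1 + 2 * Bnorm (f w) ^ 2)) := hkey
        _ ≤ chiE (fn n w) (f w) * (x * (B * A)) := by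
            apply mul_le_mul_of_nonneg_left _ (chiE_nonneg _ _)
            rw [← mul_assoc]
            apply mul_le_mul hsn (hfA w hw) (Real.sqrt_nonneg _) (by nlinarith)
    have hlt : chiE (fn n w) (f w) * (x * (B * A)) < δ₀ * (x * (B * A)) := by
      apply mul_lt_mul_of_pos_right hc
      positivity
    have heq : δ₀ * (x * (B * A)) = x / 2 := by
      rw [hδdef]; field_simp
    linarith
  -- main step
  intro ε hε
  set ε₁ : ℝ := min δ₀ (ε / (B * A)) with hε₁def
  have hε₁0 : 0 < ε₁ := lt_min hδ0 (by positivity)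
  obtain ⟨N, hN⟩ := hconv ε₁ hε₁0
  refine ⟨N, fun n hn w hw => ?_⟩
  have hc := hN n hn w hw
  have hc0 := chiE_nonneg (fn n w) (f w)
  have hcδ : chiE (fn n w) (f w) < δ₀ := lt_of_lt_of_le hc (min_le_left _ _)
  have hx1 : Bnorm (fn n w - f w) ≤ 1 := hbound n w hw hcδ
  have hfn : Bnorm (fn n w) ≤ M + 1 := by
    have e : fn n w = (fn n w - f w) + f w := by ring
    calc Bnorm (fn n w) = Bnorm ((fn n w - f w) + f w) := by rw [← e]
      _ ≤ Bnorm (fn n w - f w) + Bnorm (f w) := bnorm_add_le _ _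
      _ ≤ M + 1 := by have := hMb w hw; linarith
  have hsn : Real.sqrt (1 + 2 * Bnorm (fn n w) ^ 2) ≤ B := by
    rw [hBdef]
    apply Real.sqrt_le_sqrt
    nlinarith [bnorm_nonneg (fn n w), hfn, hM0]
  calc Bnorm (fn n w - f w)
      ≤ chiE (fn n w) (f w) *
        (Real.sqrt (1 + 2 * Bnorm (fn n w) ^ 2) * Real.sqrt (1 + 2 * Bnorm (f w) ^ 2)) :=
        bnorm_le_chiE _ _
    _ ≤ chiE (fn n w) (f w) * (B * A) := by
        apply mul_le_mul_of_nonneg_left _ hc0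
        apply mul_le_mul hsn (hfA w hw) (Real.sqrt_nonneg _) (le_of_lt hB0)
    _ < ε₁ * (B * A) := mul_lt_mul_of_pos_right hc (by positivity)
    _ ≤ (ε / (B * A)) * (B * A) := by
        apply mul_le_mul_of_nonneg_right (min_le_right _ _) (by positivity)
    _ = ε := by field_simp
end
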